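/- Let A be a real m×n matrix such that A·Aᵀ is invertible, and set Ã = (A·Aᵀ)⁻¹. Let x, p ∈ ℝⁿ, b = A·x, and assume the scalar D = ⟪p, p⟫ - ⟪A·p, Ã·(A·p)⟫ is nonzero. Define α = (⟪x, p⟫ - ⟪A·p, Ã·b⟫)/D, u = Ã·(b - α·(A·p)), and q = α·p + Aᵀ·u. Then ‖q‖² = α²·‖p‖² + ⟪b, Ã·b⟫ - α²·⟪A·p, Ã·(A·p)⟫. -/

import Mathlib

open scoped RealInnerProductSpace
open Matrix

private lemma inner_dot {k : ℕ} (x y : EuclideanSpace ℝ (Fin k)) :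
    ⟪x, y⟫ = dotProduct (x : Fin k → ℝ) (y : Fin k → ℝ) := by
  simp [PiLp.inner_apply, dotProduct]
  exact Finset.sum_congr rfl fun _ _ => mul_comm _ _

private lemma ap_key {m n : ℕ} (A : Matrix (Fin m) (Fin n) ℝ)
    (Atil : Matrix (Fin m) (Fin m) ℝ)
    (hmul : (A * Aᵀ) * Atil = 1) (hsym : Atilᵀ = Atil)
    (α : ℝ) (p : Fin n → ℝ) (b : Fin m → ℝ) :
    dotProduct (α • p + Aᵀ *ᵥ (Atil *ᵥ (b - α • (A *ᵥ p))))
               (α • p + Aᵀ *ᵥ (Atil *ᵥ (b - α • (A *ᵥ p))))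
      = α ^ 2 * dotProduct p p + dotProduct b (Atil *ᵥ b)
        - α ^ 2 * dotProduct (A *ᵥ p) (Atil *ᵥ (A *ᵥ p)) := by
  set Ap := A *ᵥ p with hAp
  set u := Atil *ᵥ (b - α • Ap) with hu
  have hsymv : ∀ v w : Fin m → ℝ, v ⬝ᵥ Atil *ᵥ w = w ⬝ᵥ Atil *ᵥ v := by
    intro v w
    rw [Matrix.dotProduct_mulVec]
    conv_lhs => rw [← hsym]
    rw [Matrix.vecMul_transpose, dotProduct_comm]
  have key1 : (A * Aᵀ) *ᵥ u = b - α • Ap := by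
    rw [hu, Matrix.mulVec_mulVec, hmul, Matrix.one_mulVec]
  have h1 : p ⬝ᵥ Aᵀ *ᵥ u = Ap ⬝ᵥ u := by
    rw [Matrix.dotProduct_mulVec, Matrix.vecMul_transpose]
  have h2 : (Aᵀ *ᵥ u) ⬝ᵥ (Aᵀ *ᵥ u) = (b - α • Ap) ⬝ᵥ u := by
    rw [Matrix.dotProduct_mulVec, Matrix.vecMul_transpose, Matrix.mulVec_mulVec, key1]
  have h3 : Ap ⬝ᵥ u = Ap ⬝ᵥ Atil *ᵥ b - α * (Ap ⬝ᵥ Atil *ᵥ Ap) := by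
    rw [hu, Matrix.mulVec_sub, Matrix.mulVec_smul, dotProduct_sub, dotProduct_smul,
      smul_eq_mul]
  have h4 : b ⬝ᵥ u = b ⬝ᵥ Atil *ᵥ b - α * (Ap ⬝ᵥ Atil *ᵥ b) := by
    rw [hu, Matrix.mulVec_sub, Matrix.mulVec_smul, dotProduct_sub, dotProduct_smul,
      smul_eq_mul, hsymv b Ap]
  rw [sub_dotProduct, smul_dotProduct, smul_eq_mul] at h2
  simp only [dotProduct_add, add_dotProduct, smul_dotProduct, dotProduct_smul,
    smul_eq_mul, h1, h2, dotProduct_comm (Aᵀ *ᵥ u) p]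
  rw [h3, h4]
  ring

/-- the norm identity
`‖q‖² = α² ‖p‖² + ⟪b, Ã b⟫ - α² ⟪A p, Ã (A p)⟫` for the vector
`q = α p + Aᵀ u` built in the accumulated projection step. -/
theorem ap_step_norm_identity {m n : ℕ}
    (A : Matrix (Fin m) (Fin n) ℝ) (hinv : IsUnit (A * Aᵀ))
    (Atil : Matrix (Fin m) (Fin m) ℝ) (hAtil : Atil = (A * Aᵀ)⁻¹)
    (x p : EuclideanSpace ℝ (Fin n))
    (b : EuclideanSpace ℝ (Fin m)) (hb : b = A.mulVec x)
    (Ap : EuclideanSpace ℝ (Fin m)) (hAp : Ap = A.mulVec p)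
    (D : ℝ) (hD : D = ⟪p, p⟫ - ⟪Ap, (WithLp.toLp 2 (Atil.mulVec Ap) : EuclideanSpace ℝ (Fin m))⟫)
    (hDne : D ≠ 0)
    (α : ℝ) (hα : α = (⟪x, p⟫ - ⟪Ap, (WithLp.toLp 2 (Atil.mulVec b) : EuclideanSpace ℝ (Fin m))⟫) / D)
    (u : EuclideanSpace ℝ (Fin m)) (hu : u = Atil.mulVec (b - α • Ap))
    (Atu : EuclideanSpace ℝ (Fin n)) (hAtu : Atu = Aᵀ.mulVec u)
    (q : EuclideanSpace ℝ (Fin n)) (hq : q = α • p + Atu) :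
    ‖q‖ ^ 2 = α ^ 2 * ‖p‖ ^ 2 + ⟪b, (WithLp.toLp 2 (Atil.mulVec b) : EuclideanSpace ℝ (Fin m))⟫
      - α ^ 2 * ⟪Ap, (WithLp.toLp 2 (Atil.mulVec Ap) : EuclideanSpace ℝ (Fin m))⟫ := by
  have hdet : IsUnit (A * Aᵀ).det := (Matrix.isUnit_iff_isUnit_det _).mp hinv
  have hmul : (A * Aᵀ) * Atil = 1 := by
    rw [hAtil]; exact Matrix.mul_nonsing_inv _ hdet
  have hsym : Atilᵀ = Atil := by
    rw [hAtil, Matrix.transpose_nonsing_inv, Matrix.transpose_mul,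
      Matrix.transpose_transpose]
  have hnq : ‖q‖ ^ 2 = ⟪q, q⟫ := (real_inner_self_eq_norm_sq q).symm
  have hnp : ‖p‖ ^ 2 = ⟪p, p⟫ := (real_inner_self_eq_norm_sq p).symm
  rw [hnq, hnp, inner_dot, inner_dot, inner_dot, inner_dot]
  subst hq
  simp only [WithLp.ofLp_add, WithLp.ofLp_smul, WithLp.ofLp_toLp]
  rw [hAtu, hu, hAp]
  exact ap_key A Atil hmul hsym α p b
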